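/- For all complex numbers q, z with |q| < 1 and |q·z| < 1, one has (∏_{k=1}^∞ (1 − q^k z)) · (1 + ∑_{n=1}^∞ q^n z^n / ∏_{j=1}^n (1 − q^j)) = 1; equivalently 1/∏_{k=1}^∞ (1 − q^k z) = 1 + ∑_{n=1}^∞ q^n z^n / ∏_{j=1}^n (1 − q^j) (Euler's expansion of 1/((1−qz)(1−q²z)(1−q³z)⋯)). -/

import Mathlib

open Complex Finset Filter Topology

private lemma euler_norm_term (q w : ℂ) (k : ℕ) : ‖q ^ (k + 1) * w‖ = ‖q‖ ^ k * ‖q * w‖ := by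
  have : q ^ (k + 1) * w = q ^ k * (q * w) := by ring
  rw [this, norm_mul, norm_pow]

private lemma euler_term_lt_one {q w : ℂ} (hq : ‖q‖ < 1) (hw : ‖q * w‖ < 1) (k : ℕ) :
    ‖q ^ (k + 1) * w‖ < 1 := by
  rw [euler_norm_term]
  calc ‖q‖ ^ k * ‖q * w‖ ≤ 1 * ‖q * w‖ := by
        gcongr
        exact pow_le_one₀ (norm_nonneg q) hq.le
    _ < 1 := by simpa using hw

private lemma euler_factor_ne {q w : ℂ} (hq : ‖q‖ < 1) (hw : ‖q * w‖ < 1) (k : ℕ) :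
    1 - q ^ (k + 1) * w ≠ 0 := by
  intro h
  have h1 : (1 : ℂ) = q ^ (k + 1) * w := sub_eq_zero.mp h
  have := euler_term_lt_one hq hw k
  rw [← h1] at this
  simp at this

private lemma euler_log_term_le {q w : ℂ} (hq : ‖q‖ < 1) {r : ℝ} (hwr : ‖q * w‖ ≤ r)
    (hr : r < 1) (k : ℕ) :
    ‖Complex.log (1 - q ^ (k + 1) * w)‖ ≤ (r * (1 - r)⁻¹ / 2 + 1) * (‖q * w‖ * ‖q‖ ^ k) := by
  have hr0 : 0 ≤ r := le_trans (norm_nonneg _) hwr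
  have hw : ‖q * w‖ < 1 := lt_of_le_of_lt hwr hr
  have hlt : ‖-(q ^ (k + 1) * w)‖ < 1 := by
    rw [norm_neg]; exact euler_term_lt_one hq hw k
  have hb := Complex.norm_log_one_add_le hlt
  have h1 : (1 : ℂ) + -(q ^ (k + 1) * w) = 1 - q ^ (k + 1) * w := by ring
  rw [h1] at hb
  rw [norm_neg, euler_norm_term] at hb
  set x := ‖q‖ ^ k * ‖q * w‖ with hx
  have hxr : x ≤ r := by
    calc ‖q‖ ^ k * ‖q * w‖ ≤ 1 * r :=
          mul_le_mul (pow_le_one₀ (norm_nonneg q) hq.le) hwr (norm_nonneg _) zero_le_one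
      _ = r := one_mul r
  have hxlt : x < 1 := lt_of_le_of_lt hxr hr
  have hx0 : 0 ≤ x := mul_nonneg (pow_nonneg (norm_nonneg q) k) (norm_nonneg _)
  have hinv : (1 - x)⁻¹ ≤ (1 - r)⁻¹ := inv_anti₀ (by linarith) (by linarith)
  have hinv0 : (0:ℝ) ≤ (1 - x)⁻¹ := inv_nonneg.mpr (by linarith)
  have key : x ^ 2 * (1 - x)⁻¹ ≤ x * r * (1 - r)⁻¹ :=
    mul_le_mul (by rw [sq]; exact mul_le_mul_of_nonneg_left hxr hx0) hinv hinv0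
      (mul_nonneg hx0 hr0)
  calc ‖Complex.log (1 - q ^ (k + 1) * w)‖ ≤ x ^ 2 * (1 - x)⁻¹ / 2 + x := hb
    _ ≤ x * r * (1 - r)⁻¹ / 2 + x := by linarith
    _ = (r * (1 - r)⁻¹ / 2 + 1) * (‖q * w‖ * ‖q‖ ^ k) := by rw [hx]; ring

private lemma euler_summable_log {q w : ℂ} (hq : ‖q‖ < 1) (hw : ‖q * w‖ < 1) :
    Summable fun k : ℕ => Complex.log (1 - q ^ (k + 1) * w) := by
  apply Summable.of_norm_bounded
    (g := fun k : ℕ => (‖q * w‖ * (1 - ‖q * w‖)⁻¹ / 2 + 1) * (‖q * w‖ * ‖q‖ ^ k))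
  · exact (((summable_geometric_of_lt_one (norm_nonneg q) hq).mul_left _).mul_left _)
  · exact fun k => euler_log_term_le hq le_rfl hw k

private lemma euler_tprod_eq_exp {q w : ℂ} (hq : ‖q‖ < 1) (hw : ‖q * w‖ < 1) :
    (∏' k : ℕ, (1 - q ^ (k + 1) * w)) =
      Complex.exp (∑' k : ℕ, Complex.log (1 - q ^ (k + 1) * w)) := by
  have := Complex.cexp_tsum_eq_tprod (f := fun (k : ℕ) => 1 - q ^ (k + 1) * w)
    (fun k => euler_factor_ne hq hw k) (euler_summable_log hq hw)
  exact this.symm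

private lemma euler_multipliable {q w : ℂ} (hq : ‖q‖ < 1) (hw : ‖q * w‖ < 1) :
    Multipliable fun k : ℕ => 1 - q ^ (k + 1) * w :=
  Complex.multipliable_of_summable_log (f := fun (k : ℕ) => 1 - q ^ (k + 1) * w)
    (euler_summable_log hq hw)

private lemma euler_tprod_ne_zero {q w : ℂ} (hq : ‖q‖ < 1) (hw : ‖q * w‖ < 1) :
    (∏' k : ℕ, (1 - q ^ (k + 1) * w)) ≠ 0 := by
  rw [euler_tprod_eq_exp hq hw]; exact Complex.exp_ne_zero _

private lemma euler_D_lower {q : ℂ} (hq : ‖q‖ < 1) (n : ℕ) :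
    Real.exp (-(‖q‖ / (1 - ‖q‖) ^ 2)) ≤ ‖∏ j ∈ Finset.range (n + 1), (1 - q ^ (j + 1))‖ := by
  set t := ‖q‖ with ht
  have ht0 : 0 ≤ t := norm_nonneg q
  have htpow : ∀ j : ℕ, t ^ (j + 1) ≤ t := fun j => by
    calc t ^ (j + 1) = t ^ j * t := pow_succ t j
      _ ≤ 1 * t := by gcongr; exact pow_le_one₀ ht0 hq.le
      _ = t := one_mul t
  have htpos : ∀ j : ℕ, (0:ℝ) < 1 - t ^ (j + 1) := fun j => by
    have := htpow j; linarith
  -- step 1 : ∏ (1 - t^(j+1)) ≤ ‖∏ (1 - q^(j+1))‖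
  have step1 : (∏ j ∈ Finset.range (n + 1), (1 - t ^ (j + 1))) ≤
      ‖∏ j ∈ Finset.range (n + 1), (1 - q ^ (j + 1))‖ := by
    rw [norm_prod]
    apply Finset.prod_le_prod (fun j _ => (htpos j).le)
    intro j _
    calc (1 : ℝ) - t ^ (j + 1) = 1 - ‖q ^ (j+1)‖ := by rw [norm_pow]
      _ = ‖(1:ℂ)‖ - ‖q ^ (j+1)‖ := by simp
      _ ≤ ‖1 - q ^ (j + 1)‖ := norm_sub_norm_le _ _
  -- step 2 : exp bound
  refine le_trans ?_ step1
  have hexp : (∏ j ∈ Finset.range (n + 1), (1 - t ^ (j + 1))) =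
      Real.exp (∑ j ∈ Finset.range (n + 1), Real.log (1 - t ^ (j + 1))) := by
    rw [Real.exp_sum]
    exact (Finset.prod_congr rfl fun j _ => (Real.exp_log (htpos j)).symm)
  rw [hexp]
  apply Real.exp_le_exp.mpr
  have hlog : ∀ j : ℕ, -(t ^ (j + 1) / (1 - t)) ≤ Real.log (1 - t ^ (j + 1)) := by
    intro j
    have h1 : Real.log (1 - t ^ (j + 1)) = -Real.log (1 - t ^ (j + 1))⁻¹ := by
      rw [Real.log_inv]; ring
    rw [h1, neg_le_neg_iff]
    have h2 : Real.log (1 - t ^ (j + 1))⁻¹ ≤ (1 - t ^ (j + 1))⁻¹ - 1 :=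
      Real.log_le_sub_one_of_pos (inv_pos.mpr (htpos j))
    refine h2.trans ?_
    have hx1 : (1:ℝ) - t ^ (j + 1) ≠ 0 := (htpos j).ne'
    have h3 : (1 - t ^ (j + 1))⁻¹ - 1 = t ^ (j + 1) / (1 - t ^ (j + 1)) := by
      rw [inv_eq_one_div, div_sub_one hx1]
      congr 1
      ring
    rw [h3]
    apply div_le_div_of_nonneg_left (pow_nonneg ht0 _) (by linarith) ?_
    · have := htpow j; linarith
  have hsum : (∑ j ∈ Finset.range (n + 1), t ^ (j + 1)) ≤ t / (1 - t) := by
    have h4 : ∀ j ∈ Finset.range (n+1), t ^ (j+1) = t * t ^ j := fun j _ => by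
      rw [pow_succ]; ring
    rw [Finset.sum_congr rfl h4, ← Finset.mul_sum]
    rw [div_eq_mul_inv]
    gcongr
    calc (∑ j ∈ Finset.range (n + 1), t ^ j) ≤ ∑' j : ℕ, t ^ j :=
          Summable.sum_le_tsum _ (fun j _ => pow_nonneg ht0 j)
            (summable_geometric_of_lt_one ht0 hq)
      _ = (1 - t)⁻¹ := tsum_geometric_of_lt_one ht0 hq
  have hrw : -((∑ j ∈ Finset.range (n + 1), t ^ (j+1)) / (1 - t)) =
      ∑ j ∈ Finset.range (n + 1), -(t ^ (j+1) / (1 - t)) := by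
    rw [Finset.sum_div, neg_eq_iff_eq_neg, ← Finset.sum_neg_distrib]
    simp
  calc -(t / (1 - t) ^ 2) ≤ -((∑ j ∈ Finset.range (n + 1), t ^ (j+1)) / (1 - t)) := by
        rw [neg_le_neg_iff]
        calc (∑ j ∈ Finset.range (n + 1), t ^ (j+1)) / (1 - t)
            ≤ (t / (1 - t)) / (1 - t) := by gcongr
          _ = t / (1 - t) ^ 2 := by rw [div_div, sq]
    _ = ∑ j ∈ Finset.range (n + 1), -(t ^ (j+1) / (1 - t)) := hrw
    _ ≤ ∑ j ∈ Finset.range (n + 1), Real.log (1 - t ^ (j + 1)) :=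
        Finset.sum_le_sum fun j _ => hlog j

private lemma euler_T_norm_le {q w : ℂ} (hq : ‖q‖ < 1) (n : ℕ) :
    ‖q ^ (n + 1) * w ^ (n + 1) / ∏ j ∈ Finset.range (n + 1), (1 - q ^ (j + 1))‖ ≤
      (Real.exp (-(‖q‖ / (1 - ‖q‖) ^ 2)))⁻¹ * ‖q * w‖ ^ (n + 1) := by
  have hc : (0:ℝ) < Real.exp (-(‖q‖ / (1 - ‖q‖) ^ 2)) := Real.exp_pos _
  rw [norm_div]
  have h1 : q ^ (n + 1) * w ^ (n + 1) = (q * w) ^ (n + 1) := (mul_pow q w (n+1)).symm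
  rw [h1, norm_pow, div_eq_mul_inv, mul_comm]
  exact mul_le_mul_of_nonneg_right (inv_anti₀ hc (euler_D_lower hq n))
    (pow_nonneg (norm_nonneg _) _)

private lemma euler_T_norm_le' {q w : ℂ} (hq : ‖q‖ < 1) {r : ℝ} (hwr : ‖q * w‖ ≤ r) (n : ℕ) :
    ‖q ^ (n + 1) * w ^ (n + 1) / ∏ j ∈ Finset.range (n + 1), (1 - q ^ (j + 1))‖ ≤
      (Real.exp (-(‖q‖ / (1 - ‖q‖) ^ 2)))⁻¹ * ‖q * w‖ * r ^ n := by
  refine (euler_T_norm_le hq n).trans ?_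
  rw [mul_assoc]
  gcongr
  calc ‖q * w‖ ^ (n + 1) = ‖q * w‖ * ‖q * w‖ ^ n := by ring
    _ ≤ ‖q * w‖ * r ^ n := by gcongr

private lemma euler_T_summable {q w : ℂ} (hq : ‖q‖ < 1) (hw : ‖q * w‖ < 1) :
    Summable fun n : ℕ => q ^ (n + 1) * w ^ (n + 1) /
      ∏ j ∈ Finset.range (n + 1), (1 - q ^ (j + 1)) := by
  apply Summable.of_norm_bounded
    (g := fun n : ℕ => (Real.exp (-(‖q‖ / (1 - ‖q‖) ^ 2)))⁻¹ * ‖q * w‖ * ‖q * w‖ ^ n)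
  · exact ((summable_geometric_of_lt_one (norm_nonneg _) hw).mul_left _)
  · exact fun n => euler_T_norm_le' hq le_rfl n

private lemma euler_T_bound {q w : ℂ} (hq : ‖q‖ < 1) {r : ℝ} (hwr : ‖q * w‖ ≤ r) (hr : r < 1) :
    ‖∑' n : ℕ, q ^ (n + 1) * w ^ (n + 1) / ∏ j ∈ Finset.range (n + 1), (1 - q ^ (j + 1))‖ ≤
      (Real.exp (-(‖q‖ / (1 - ‖q‖) ^ 2)))⁻¹ * (1 - r)⁻¹ * ‖q * w‖ := by
  set c := Real.exp (-(‖q‖ / (1 - ‖q‖) ^ 2)) with hcdef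
  have hr0 : (0:ℝ) ≤ r := le_trans (norm_nonneg _) hwr
  have hgs : Summable fun n : ℕ => c⁻¹ * ‖q * w‖ * r ^ n :=
    (summable_geometric_of_lt_one hr0 hr).mul_left _
  have hnorms : Summable fun n : ℕ =>
      ‖q ^ (n + 1) * w ^ (n + 1) / ∏ j ∈ Finset.range (n + 1), (1 - q ^ (j + 1))‖ :=
    Summable.of_nonneg_of_le (fun n => norm_nonneg _) (euler_T_norm_le' hq hwr) hgs
  calc ‖∑' n : ℕ, q ^ (n + 1) * w ^ (n + 1) / ∏ j ∈ Finset.range (n + 1), (1 - q ^ (j + 1))‖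
      ≤ ∑' n : ℕ, ‖q ^ (n + 1) * w ^ (n + 1) / ∏ j ∈ Finset.range (n + 1), (1 - q ^ (j + 1))‖ :=
        norm_tsum_le_tsum_norm hnorms
    _ ≤ ∑' n : ℕ, c⁻¹ * ‖q * w‖ * r ^ n :=
        Summable.tsum_le_tsum (euler_T_norm_le' hq hwr) hnorms hgs
    _ = c⁻¹ * ‖q * w‖ * ∑' n : ℕ, r ^ n := tsum_mul_left
    _ = c⁻¹ * ‖q * w‖ * (1 - r)⁻¹ := by rw [tsum_geometric_of_lt_one hr0 hr]
    _ = c⁻¹ * (1 - r)⁻¹ * ‖q * w‖ := by ring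

private lemma euler_qw_lt {q w : ℂ} (hq : ‖q‖ < 1) (hw : ‖q * w‖ < 1) :
    ‖q * (q * w)‖ < 1 := by
  rw [norm_mul]
  calc ‖q‖ * ‖q * w‖ ≤ 1 * ‖q * w‖ := by gcongr
    _ < 1 := by simpa using hw

private lemma euler_FE_F {q w : ℂ} (hq : ‖q‖ < 1) (hw : ‖q * w‖ < 1) :
    (∏' k : ℕ, (1 - q ^ (k + 1) * w)) =
      (1 - q * w) * ∏' k : ℕ, (1 - q ^ (k + 1) * (q * w)) := by
  have hshift : ∀ k : ℕ, 1 - q ^ (k + 1 + 1) * w = 1 - q ^ (k + 1) * (q * w) :=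
    fun k => by ring
  have hm : Multipliable fun k : ℕ => 1 - q ^ (k + 1 + 1) * w := by
    simp_rw [hshift]
    exact euler_multipliable hq (euler_qw_lt hq hw)
  have := tprod_eq_zero_mul' (f := fun k : ℕ => 1 - q ^ (k + 1) * w) hm
  simp only [zero_add, pow_one] at this
  rw [this]
  congr 1
  exact tprod_congr hshift

private lemma euler_FE_T {q w : ℂ} (hq : ‖q‖ < 1) (hw : ‖q * w‖ < 1) :
    (1 : ℂ) + (∑' n : ℕ, q ^ (n + 1) * (q * w) ^ (n + 1) /
        ∏ j ∈ Finset.range (n + 1), (1 - q ^ (j + 1))) =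
      (1 - q * w) * (1 + ∑' n : ℕ, q ^ (n + 1) * w ^ (n + 1) /
        ∏ j ∈ Finset.range (n + 1), (1 - q ^ (j + 1))) := by
  set D : ℕ → ℂ := fun n => ∏ j ∈ Finset.range (n + 1), (1 - q ^ (j + 1)) with hD
  have hDne : ∀ n, D n ≠ 0 := by
    intro n
    apply Finset.prod_ne_zero_iff.mpr
    intro j _
    have : 1 - q ^ (j + 1) * 1 ≠ 0 := euler_factor_ne hq (by simpa using hq) j
    simpa using this
  have hg : Summable fun n : ℕ => q ^ (n + 1) * w ^ (n + 1) / D n :=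
    euler_T_summable hq hw
  have hgq : Summable fun n : ℕ => q ^ (n + 1) * (q * w) ^ (n + 1) / D n :=
    euler_T_summable hq (euler_qw_lt hq hw)
  -- f n = g n - gq n
  have hf : Summable fun n : ℕ =>
      q ^ (n + 1) * w ^ (n + 1) / D n - q ^ (n + 1) * (q * w) ^ (n + 1) / D n := hg.sub hgq
  have hdiff : (∑' n : ℕ, q ^ (n + 1) * w ^ (n + 1) / D n) -
      (∑' n : ℕ, q ^ (n + 1) * (q * w) ^ (n + 1) / D n) =
      ∑' n : ℕ, (q ^ (n + 1) * w ^ (n + 1) / D n - q ^ (n + 1) * (q * w) ^ (n + 1) / D n) :=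
    (Summable.tsum_sub hg hgq).symm
  -- shift the difference series
  have hzero : q ^ (0 + 1) * w ^ (0 + 1) / D 0 - q ^ (0 + 1) * (q * w) ^ (0 + 1) / D 0 =
      q * w := by
    have hD0 : D 0 = 1 - q := by simp [hD]
    have hne : (1 : ℂ) - q ≠ 0 := by
      intro h
      have : (1 : ℂ) = q := sub_eq_zero.mp h
      rw [← this] at hq
      simp at hq
    rw [hD0, div_sub_div_same]
    have hnum : q ^ (0 + 1) * w ^ (0 + 1) - q ^ (0 + 1) * (q * w) ^ (0 + 1) =
        q * w * (1 - q) := by ring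
    rw [hnum, mul_div_assoc, div_self hne, mul_one]
  have hsucc : ∀ n : ℕ,
      q ^ (n + 1 + 1) * w ^ (n + 1 + 1) / D (n + 1) -
        q ^ (n + 1 + 1) * (q * w) ^ (n + 1 + 1) / D (n + 1) =
      (q * w) * (q ^ (n + 1) * w ^ (n + 1) / D n) := by
    intro n
    have hDsucc : D (n + 1) = D n * (1 - q ^ (n + 1 + 1)) := by
      simp [hD, Finset.prod_range_succ]
    have hne2 : (1 : ℂ) - q ^ (n + 1 + 1) ≠ 0 := by
      have : 1 - q ^ (n + 1 + 1) * 1 ≠ 0 := euler_factor_ne hq (by simpa using hq) (n + 1)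
      simpa using this
    rw [hDsucc, div_sub_div_same]
    have hnum : q ^ (n + 1 + 1) * w ^ (n + 1 + 1) - q ^ (n + 1 + 1) * (q * w) ^ (n + 1 + 1) =
        (q ^ (n + 1 + 1) * w ^ (n + 1 + 1)) * (1 - q ^ (n + 1 + 1)) := by ring
    rw [hnum, mul_div_mul_right _ _ hne2, mul_div_assoc]
    rw [← mul_div_assoc, ← mul_div_assoc]
    congr 1
    ring
  have hshift := Summable.tsum_eq_zero_add hf
  rw [hzero] at hshift
  have hrw : (∑' n : ℕ, (q ^ (n + 1 + 1) * w ^ (n + 1 + 1) / D (n + 1) -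
      q ^ (n + 1 + 1) * (q * w) ^ (n + 1 + 1) / D (n + 1))) =
      (q * w) * ∑' n : ℕ, q ^ (n + 1) * w ^ (n + 1) / D n := by
    rw [← tsum_mul_left]
    exact tsum_congr hsucc
  rw [hrw] at hshift
  have key := hdiff.trans hshift
  simp only [hD] at key
  linear_combination -key

private lemma euler_L_bound {q w : ℂ} (hq : ‖q‖ < 1) {r : ℝ} (hwr : ‖q * w‖ ≤ r) (hr : r < 1) :
    ‖∑' k : ℕ, Complex.log (1 - q ^ (k + 1) * w)‖ ≤
      (r * (1 - r)⁻¹ / 2 + 1) * (1 - ‖q‖)⁻¹ * ‖q * w‖ := by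
  have hw : ‖q * w‖ < 1 := lt_of_le_of_lt hwr hr
  have hgs : Summable fun k : ℕ => (r * (1 - r)⁻¹ / 2 + 1) * (‖q * w‖ * ‖q‖ ^ k) :=
    (((summable_geometric_of_lt_one (norm_nonneg q) hq).mul_left _).mul_left _)
  have hnorms : Summable fun k : ℕ => ‖Complex.log (1 - q ^ (k + 1) * w)‖ :=
    Summable.of_nonneg_of_le (fun k => norm_nonneg _) (euler_log_term_le hq hwr hr) hgs
  calc ‖∑' k : ℕ, Complex.log (1 - q ^ (k + 1) * w)‖
      ≤ ∑' k : ℕ, ‖Complex.log (1 - q ^ (k + 1) * w)‖ := norm_tsum_le_tsum_norm hnorms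
    _ ≤ ∑' k : ℕ, (r * (1 - r)⁻¹ / 2 + 1) * (‖q * w‖ * ‖q‖ ^ k) :=
        Summable.tsum_le_tsum (euler_log_term_le hq hwr hr) hnorms hgs
    _ = (r * (1 - r)⁻¹ / 2 + 1) * (‖q * w‖ * ∑' k : ℕ, ‖q‖ ^ k) := by
        rw [← tsum_mul_left, ← tsum_mul_left]
    _ = (r * (1 - r)⁻¹ / 2 + 1) * (‖q * w‖ * (1 - ‖q‖)⁻¹) := by
        rw [tsum_geometric_of_lt_one (norm_nonneg q) hq]
    _ = (r * (1 - r)⁻¹ / 2 + 1) * (1 - ‖q‖)⁻¹ * ‖q * w‖ := by ring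

private lemma euler_P_step {q w : ℂ} (hq : ‖q‖ < 1) (hw : ‖q * w‖ < 1) :
    (∏' k : ℕ, (1 - q ^ (k + 1) * w)) *
      (1 + ∑' n : ℕ, q ^ (n + 1) * w ^ (n + 1) /
        ∏ j ∈ Finset.range (n + 1), (1 - q ^ (j + 1))) =
    (∏' k : ℕ, (1 - q ^ (k + 1) * (q * w))) *
      (1 + ∑' n : ℕ, q ^ (n + 1) * (q * w) ^ (n + 1) /
        ∏ j ∈ Finset.range (n + 1), (1 - q ^ (j + 1))) := by
  rw [euler_FE_F hq hw, euler_FE_T hq hw]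
  ring

private lemma euler_main {q z : ℂ} (hq : ‖q‖ < 1) (hqz : ‖q * z‖ < 1) :
    (∏' k : ℕ, (1 - q ^ (k + 1) * z)) *
      (1 + ∑' n : ℕ, q ^ (n + 1) * z ^ (n + 1) /
        ∏ j ∈ Finset.range (n + 1), (1 - q ^ (j + 1))) = 1 := by
  set r := ‖q * z‖ with hrdef
  have hr0 : 0 ≤ r := norm_nonneg _
  have hwr : ∀ n : ℕ, ‖q * (q ^ n * z)‖ ≤ r := by
    intro n
    have h1 : q * (q ^ n * z) = q ^ n * (q * z) := by ring
    rw [h1, norm_mul, norm_pow]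
    calc ‖q‖ ^ n * ‖q * z‖ ≤ 1 * r :=
          mul_le_mul (pow_le_one₀ (norm_nonneg q) hq.le) le_rfl (norm_nonneg _) zero_le_one
      _ = r := one_mul r
  have hw : ∀ n : ℕ, ‖q * (q ^ n * z)‖ < 1 := fun n => lt_of_le_of_lt (hwr n) hqz
  have hnormqn : ∀ n : ℕ, ‖q * (q ^ n * z)‖ = ‖q‖ ^ n * r := by
    intro n
    have h1 : q * (q ^ n * z) = q ^ n * (q * z) := by ring
    rw [h1, norm_mul, norm_pow]
  have hgeo : Filter.Tendsto (fun n : ℕ => ‖q‖ ^ n * r) Filter.atTop (nhds 0) := by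
    have := (tendsto_pow_atTop_nhds_zero_of_lt_one (norm_nonneg q) hq).mul_const r
    simpa using this
  -- the products and sums along the orbit
  have hconst : ∀ n : ℕ,
      (∏' k : ℕ, (1 - q ^ (k + 1) * z)) *
        (1 + ∑' m : ℕ, q ^ (m + 1) * z ^ (m + 1) /
          ∏ j ∈ Finset.range (m + 1), (1 - q ^ (j + 1))) =
      (∏' k : ℕ, (1 - q ^ (k + 1) * (q ^ n * z))) *
        (1 + ∑' m : ℕ, q ^ (m + 1) * (q ^ n * z) ^ (m + 1) /
          ∏ j ∈ Finset.range (m + 1), (1 - q ^ (j + 1))) := by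
    intro n
    induction n with
    | zero => simp
    | succ n ih =>
      rw [ih, euler_P_step hq (hw n)]
      have h1 : q * (q ^ n * z) = q ^ (n + 1) * z := by ring
      rw [h1]
  -- limit of the sum part
  have hT : Filter.Tendsto (fun n : ℕ => ∑' m : ℕ, q ^ (m + 1) * (q ^ n * z) ^ (m + 1) /
      ∏ j ∈ Finset.range (m + 1), (1 - q ^ (j + 1))) Filter.atTop (nhds 0) := by
    apply squeeze_zero_norm
      (a := fun n : ℕ => (Real.exp (-(‖q‖ / (1 - ‖q‖) ^ 2)))⁻¹ * (1 - r)⁻¹ * (‖q‖ ^ n * r))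
    · intro n
      have := euler_T_bound (w := q ^ n * z) hq (hwr n) hqz
      rwa [hnormqn n] at this
    · simpa using hgeo.const_mul ((Real.exp (-(‖q‖ / (1 - ‖q‖) ^ 2)))⁻¹ * (1 - r)⁻¹)
  have hS : Filter.Tendsto (fun n : ℕ => 1 + ∑' m : ℕ, q ^ (m + 1) * (q ^ n * z) ^ (m + 1) /
      ∏ j ∈ Finset.range (m + 1), (1 - q ^ (j + 1))) Filter.atTop (nhds 1) := by
    have := hT.const_add (1 : ℂ)
    simpa using this
  -- limit of the product part
  have hL : Filter.Tendsto (fun n : ℕ => ∑' k : ℕ, Complex.log (1 - q ^ (k + 1) * (q ^ n * z)))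
      Filter.atTop (nhds 0) := by
    apply squeeze_zero_norm
      (a := fun n : ℕ => (r * (1 - r)⁻¹ / 2 + 1) * (1 - ‖q‖)⁻¹ * (‖q‖ ^ n * r))
    · intro n
      have := euler_L_bound (w := q ^ n * z) hq (hwr n) hqz
      rwa [hnormqn n] at this
    · simpa using hgeo.const_mul ((r * (1 - r)⁻¹ / 2 + 1) * (1 - ‖q‖)⁻¹)
  have hF : Filter.Tendsto (fun n : ℕ => ∏' k : ℕ, (1 - q ^ (k + 1) * (q ^ n * z)))
      Filter.atTop (nhds 1) := by
    have hcomp := (Complex.continuous_exp.tendsto 0).comp hL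
    rw [Complex.exp_zero] at hcomp
    apply hcomp.congr
    intro n
    exact (euler_tprod_eq_exp hq (hw n)).symm
  have hPlim : Filter.Tendsto (fun n : ℕ =>
      (∏' k : ℕ, (1 - q ^ (k + 1) * (q ^ n * z))) *
        (1 + ∑' m : ℕ, q ^ (m + 1) * (q ^ n * z) ^ (m + 1) /
          ∏ j ∈ Finset.range (m + 1), (1 - q ^ (j + 1)))) Filter.atTop (nhds 1) := by
    have := hF.mul hS
    simpa using this
  have hPconst : Filter.Tendsto (fun n : ℕ =>
      (∏' k : ℕ, (1 - q ^ (k + 1) * (q ^ n * z))) *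
        (1 + ∑' m : ℕ, q ^ (m + 1) * (q ^ n * z) ^ (m + 1) /
          ∏ j ∈ Finset.range (m + 1), (1 - q ^ (j + 1)))) Filter.atTop
      (nhds ((∏' k : ℕ, (1 - q ^ (k + 1) * z)) *
        (1 + ∑' m : ℕ, q ^ (m + 1) * z ^ (m + 1) /
          ∏ j ∈ Finset.range (m + 1), (1 - q ^ (j + 1))))) :=
    tendsto_const_nhds.congr fun n => hconst n
  exact tendsto_nhds_unique hPconst hPlim

/-- Euler's expansion of `1/((1−qz)(1−q²z)(1−q³z)⋯)`: for `‖q‖ < 1` and `‖q·z‖ < 1`,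
`(∏_{k=1}^∞ (1 - q^k z)) · (1 + ∑_{n=1}^∞ q^n z^n / ∏_{j=1}^n (1 - q^j)) = 1`;
equivalently `1/∏_{k=1}^∞ (1 - q^k z) = 1 + ∑_{n=1}^∞ q^n z^n / ∏_{j=1}^n (1 - q^j)`. -/
theorem euler_reciprocal_product_expansion (q z : ℂ) (hq : ‖q‖ < 1) (hqz : ‖q * z‖ < 1) :
    (∏' k : ℕ, (1 - q ^ (k + 1) * z)) *
      (1 + ∑' n : ℕ, q ^ (n + 1) * z ^ (n + 1) /
        ∏ j ∈ Finset.range (n + 1), (1 - q ^ (j + 1))) = 1 ∧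
    (∏' k : ℕ, (1 - q ^ (k + 1) * z))⁻¹ =
      1 + ∑' n : ℕ, q ^ (n + 1) * z ^ (n + 1) /
        ∏ j ∈ Finset.range (n + 1), (1 - q ^ (j + 1)) := by
  have h := euler_main hq hqz
  exact ⟨h, inv_eq_of_mul_eq_one_right h⟩
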